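/- arXiv:2009.13111 — 2 statements merged into one kernel-verified Lean document; each statement's English description precedes it below -/
import Mathlib

section
/- Let X be a finite subset of ℝ² and G = DG(X) its diameter graph. Then G contains no cycle of length 2k for any k ≥ 2. -/
noncomputable section

/-- the diameter graph of a finite set of points: two points are adjacent iff
their distance equals the diameter of the set -/
def DG {d : ℕ} (X : Finset (EuclideanSpace ℝ (Fin d))) : SimpleGraph X where
  Adj p q := (p : EuclideanSpace ℝ (Fin d)) ≠ q ∧
    dist (p : EuclideanSpace ℝ (Fin d)) q = Metric.diam (X : Set (EuclideanSpace ℝ (Fin d)))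
  symm := by
    constructor
    intro p q h
    exact ⟨fun hh => h.1 hh.symm, by rw [dist_comm]; exact h.2⟩
  loopless := by constructor; intro p h; exact h.1 rfl

/-- the independence number of a graph -/
def indepNum {V : Type*} [Fintype V] (G : SimpleGraph V) : ℕ :=
  sSup {n | ∃ s : Finset V, s.card = n ∧ ∀ x ∈ s, ∀ y ∈ s, x ≠ y → ¬ G.Adj x y}

/-- `G` contains a cycle of length `m` -/
def HasCycleOfLength {V : Type*} (G : SimpleGraph V) (m : ℕ) : Prop :=
  ∃ (v : V) (c : G.Walk v v), c.IsCycle ∧ c.length = m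

section Aux
open Metric
local notation "E" => EuclideanSpace ℝ (Fin 2)

lemma seg_dist {V : Type*} [NormedAddCommGroup V] [NormedSpace ℝ V] {a b x : V}
    (h : x ∈ segment ℝ a b) : dist a x + dist x b = dist a b :=
  (mem_segment_iff_wbtw.mp h).dist_add_dist

lemma eq_right_of_seg {V : Type*} [NormedAddCommGroup V] [NormedSpace ℝ V] {a q x : V} {D : ℝ}
    (h : x ∈ segment ℝ a q) (h1 : dist a x = D) (h2 : dist a q ≤ D) : x = q := by
  have h3 := seg_dist h
  have : dist x q ≤ 0 := by linarith
  exact dist_le_zero.mp this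

lemma parallel_of_cross_zero {u w : E} (hu : u ≠ 0)
    (h : u 0 * w 1 = u 1 * w 0) : ∃ s : ℝ, w = s • u := by
  by_cases h0 : u 0 = 0
  · have h1 : u 1 ≠ 0 := by
      intro h1
      exact hu (by ext i; fin_cases i <;> simp [h0, h1])
    have hw0 : w 0 = 0 := by
      have h2 : u 1 * w 0 = 0 := by rw [← h, h0]; ring
      rcases mul_eq_zero.mp h2 with h' | h'
      · exact absurd h' h1
      · exact h'
    refine ⟨w 1 / u 1, ?_⟩
    ext i
    fin_cases i
    · simp [PiLp.smul_apply, smul_eq_mul, hw0, h0]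
    · simp [PiLp.smul_apply, smul_eq_mul]
      field_simp
  · refine ⟨w 0 / u 0, ?_⟩
    ext i
    fin_cases i
    · simp [PiLp.smul_apply, smul_eq_mul]
      field_simp
    · simp [PiLp.smul_apply, smul_eq_mul]
      field_simp
      linarith [h]

lemma lens_on_line {a b x : E} {D : ℝ} (hD : 0 < D) (hab : dist a b = D)
    (h : (b - a) 0 * (x - a) 1 = (b - a) 1 * (x - a) 0)
    (hxa : dist x a ≤ D) (hxb : dist x b ≤ D) : x ∈ segment ℝ a b := by
  have hne : b - a ≠ 0 := sub_ne_zero.mpr (by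
    intro hba; rw [hba] at hab; simp at hab; linarith)
  obtain ⟨s, hs⟩ := parallel_of_cross_zero hne h
  have hnorm : ‖b - a‖ = D := by rw [← dist_eq_norm b a, dist_comm]; exact hab
  have hxa' : dist x a = |s| * D := by
    rw [dist_eq_norm, hs, norm_smul, hnorm]; simp [abs_of_nonneg]
  have hxbeq : x - b = (s - 1) • (b - a) := by
    have : x - b = (x - a) - (b - a) := by abel
    rw [this, hs]; module
  have hxb' : dist x b = |s - 1| * D := by
    rw [dist_eq_norm, hxbeq, norm_smul, hnorm]; simp
  have hs1 : |s| ≤ 1 := by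
    rw [hxa'] at hxa; nlinarith
  have hs2 : |s - 1| ≤ 1 := by
    rw [hxb'] at hxb; nlinarith
  rw [abs_le] at hs1 hs2
  refine ⟨1 - s, s, by linarith [hs1.1, hs2.2], by linarith, by ring, ?_⟩
  have hx : x = a + s • (b - a) := by
    have := hs
    have h2 : x = a + (x - a) := by abel
    rw [h2, this]
  rw [hx]; module

lemma mem_seg_of_hull_triple {V : Type*} [NormedAddCommGroup V] [NormedSpace ℝ V]
    {a b c d : V} {D : ℝ}
    (hb : b ∈ convexHull ℝ ({a, c, d} : Set V)) (hab : dist a b = D)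
    (hac : dist a c ≤ D) (had : dist a d ≤ D) : b ∈ segment ℝ c d := by
  rw [convexHull_insert ⟨c, Set.mem_insert _ _⟩, convexHull_pair] at hb
  rw [mem_convexJoin] at hb
  obtain ⟨x, hx, q, hq, hbq⟩ := hb
  rw [Set.mem_singleton_iff] at hx
  rw [hx] at hbq
  have hq' : dist a q ≤ D := by
    have hsub : segment ℝ c d ⊆ Metric.closedBall a D :=
      (convex_closedBall a D).segment_subset
        (by simpa [Metric.mem_closedBall, dist_comm] using hac)
        (by simpa [Metric.mem_closedBall, dist_comm] using had)
    have := hsub hq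
    rwa [Metric.mem_closedBall, dist_comm] at this
  rwa [eq_right_of_seg hbq hab hq']

lemma cross_of_interleaved {V : Type*} [NormedAddCommGroup V] [NormedSpace ℝ V]
    [StrictConvexSpace ℝ V] {a b c d p : V} {D : ℝ}
    (hp1 : p ∈ segment ℝ a c) (hp2 : p ∈ segment ℝ b d)
    (hab : dist a b = D) (hcd : dist c d = D)
    (hac : dist a c ≤ D) (hbd : dist b d ≤ D) :
    (segment ℝ a b ∩ segment ℝ c d).Nonempty := by
  have h1 := seg_dist hp1
  have h2 := seg_dist hp2
  have t1 := dist_triangle a p b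
  have t2 := dist_triangle c p d
  have c1 : dist p b = dist b p := dist_comm _ _
  have c2 : dist p c = dist c p := dist_comm _ _
  have e1 : dist a p + dist p b = dist a b := by linarith
  have e2 : dist c p + dist p d = dist c d := by linarith
  exact ⟨p, mem_segment_iff_wbtw.mpr (dist_add_dist_eq_iff.mp e1),
    mem_segment_iff_wbtw.mpr (dist_add_dist_eq_iff.mp e2)⟩

lemma opp_sign_of_combo {A B t₁ t₂ : ℝ} (h1 : 0 ≤ t₁) (h2 : 0 ≤ t₂) (hs : t₁ + t₂ = 1)
    (hc : t₁ * A + t₂ * B = 0) (hA : A ≠ 0) (hB : B ≠ 0) : A * B < 0 := by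
  rcases eq_or_lt_of_le h1 with h | h
  · exfalso
    apply hB
    have ht2 : t₂ = 1 := by linarith
    rw [← h, ht2] at hc
    simpa using hc
  rcases eq_or_lt_of_le h2 with h' | h'
  · exfalso
    apply hA
    have ht1 : t₁ = 1 := by linarith
    rw [← h', ht1] at hc
    simpa using hc
  rcases hA.lt_or_gt with hA' | hA' <;> rcases hB.lt_or_gt with hB' | hB'
  · exfalso
    nlinarith [mul_neg_of_pos_of_neg h hA', mul_neg_of_pos_of_neg h' hB']
  · exact mul_neg_of_neg_of_pos hA' hB'
  · exact mul_neg_of_pos_of_neg hA' hB'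
  · exfalso
    nlinarith [mul_pos h hA', mul_pos h' hB']

lemma diam_segments_cross {a b c d : E} {D : ℝ} (hD : 0 < D)
    (hab : dist a b = D) (hcd : dist c d = D)
    (hac : dist a c ≤ D) (had : dist a d ≤ D) (hbc : dist b c ≤ D) (hbd : dist b d ≤ D) :
    (segment ℝ a b ∩ segment ℝ c d).Nonempty := by
  have hba : dist b a = D := by rw [dist_comm]; exact hab
  have hdc : dist d c = D := by rw [dist_comm]; exact hcd
  have hca : dist c a ≤ D := by rw [dist_comm]; exact hac
  have hda : dist d a ≤ D := by rw [dist_comm]; exact had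
  have hcb : dist c b ≤ D := by rw [dist_comm]; exact hbc
  have hdb : dist d b ≤ D := by rw [dist_comm]; exact hbd
  set f : Fin 4 → E := ![a, b, c, d] with hf
  have f0 : f 0 = a := rfl
  have f1 : f 1 = b := rfl
  have f2 : f 2 = c := rfl
  have f3 : f 3 = d := rfl
  have hnotind : ¬ AffineIndependent ℝ f := by
    intro h
    have h1 := h.card_le_finrank_succ
    have h2 : Module.finrank ℝ (vectorSpan ℝ (Set.range f)) ≤ 2 := by
      have h3 := Submodule.finrank_le (vectorSpan ℝ (Set.range f))
      simpa [finrank_euclideanSpace] using h3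
    simp [Fintype.card_fin] at h1
    omega
  obtain ⟨I, p, hpI, hpIc⟩ := Convex.radon_partition hnotind
  by_cases h0 : (0:Fin 4) ∈ I <;> by_cases h1 : (1:Fin 4) ∈ I <;>
    by_cases h2 : (2:Fin 4) ∈ I <;> by_cases h3 : (3:Fin 4) ∈ I
  -- TTTT : Iᶜ = ∅
  · have hIc : Iᶜ = (∅ : Set (Fin 4)) := by
      ext i; fin_cases i <;> simp [h0, h1, h2, h3]
    rw [hIc] at hpIc
    simp at hpIc
  -- TTTF : I = {0,1,2}, Iᶜ = {3}
  · have hI : I = ({2, 0, 1} : Set (Fin 4)) := by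
      ext i; fin_cases i <;> simp [h0, h1, h2, h3]
    have hIc : Iᶜ = ({3} : Set (Fin 4)) := by
      ext i; fin_cases i <;> simp [h0, h1, h2, h3]
    rw [hI] at hpI; rw [hIc] at hpIc
    simp only [Set.image_insert_eq, Set.image_singleton, f0, f1, f2, f3,
      convexHull_singleton, Set.mem_singleton_iff] at hpI hpIc
    rw [hpIc] at hpI
    exact ⟨d, mem_seg_of_hull_triple hpI hcd hca hcb, right_mem_segment ℝ c d⟩
  -- TTFT : I = {0,1,3}, Iᶜ = {2}
  · have hI : I = ({3, 0, 1} : Set (Fin 4)) := by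
      ext i; fin_cases i <;> simp [h0, h1, h2, h3]
    have hIc : Iᶜ = ({2} : Set (Fin 4)) := by
      ext i; fin_cases i <;> simp [h0, h1, h2, h3]
    rw [hI] at hpI; rw [hIc] at hpIc
    simp only [Set.image_insert_eq, Set.image_singleton, f0, f1, f2, f3,
      convexHull_singleton, Set.mem_singleton_iff] at hpI hpIc
    rw [hpIc] at hpI
    exact ⟨c, mem_seg_of_hull_triple hpI hdc hda hdb, left_mem_segment ℝ c d⟩
  -- TTFF : I = {0,1}
  · have hI : I = ({0, 1} : Set (Fin 4)) := by
      ext i; fin_cases i <;> simp [h0, h1, h2, h3]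
    have hIc : Iᶜ = ({2, 3} : Set (Fin 4)) := by
      ext i; fin_cases i <;> simp [h0, h1, h2, h3]
    rw [hI] at hpI; rw [hIc] at hpIc
    simp only [Set.image_insert_eq, Set.image_singleton, f0, f1, f2, f3,
      convexHull_pair] at hpI hpIc
    exact ⟨p, hpI, hpIc⟩
  -- TFTT : I = {0,2,3}, Iᶜ = {1}
  · have hI : I = ({0, 2, 3} : Set (Fin 4)) := by
      ext i; fin_cases i <;> simp [h0, h1, h2, h3]
    have hIc : Iᶜ = ({1} : Set (Fin 4)) := by
      ext i; fin_cases i <;> simp [h0, h1, h2, h3]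
    rw [hI] at hpI; rw [hIc] at hpIc
    simp only [Set.image_insert_eq, Set.image_singleton, f0, f1, f2, f3,
      convexHull_singleton, Set.mem_singleton_iff] at hpI hpIc
    rw [hpIc] at hpI
    exact ⟨b, right_mem_segment ℝ a b, mem_seg_of_hull_triple hpI hab hac had⟩
  -- TFTF : I = {0,2}, Iᶜ = {1,3}
  · have hI : I = ({0, 2} : Set (Fin 4)) := by
      ext i; fin_cases i <;> simp [h0, h1, h2, h3]
    have hIc : Iᶜ = ({1, 3} : Set (Fin 4)) := by
      ext i; fin_cases i <;> simp [h0, h1, h2, h3]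
    rw [hI] at hpI; rw [hIc] at hpIc
    simp only [Set.image_insert_eq, Set.image_singleton, f0, f1, f2, f3,
      convexHull_pair] at hpI hpIc
    exact cross_of_interleaved hpI hpIc hab hcd hac hbd
  -- TFFT : I = {0,3}, Iᶜ = {1,2}
  · have hI : I = ({0, 3} : Set (Fin 4)) := by
      ext i; fin_cases i <;> simp [h0, h1, h2, h3]
    have hIc : Iᶜ = ({1, 2} : Set (Fin 4)) := by
      ext i; fin_cases i <;> simp [h0, h1, h2, h3]
    rw [hI] at hpI; rw [hIc] at hpIc
    simp only [Set.image_insert_eq, Set.image_singleton, f0, f1, f2, f3,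
      convexHull_pair] at hpI hpIc
    obtain ⟨z, hz1, hz2⟩ := cross_of_interleaved hpI hpIc hab hdc had hbc
    exact ⟨z, hz1, by rwa [segment_symm]⟩
  -- TFFF : I = {0}, Iᶜ = {1,2,3}
  · have hI : I = ({0} : Set (Fin 4)) := by
      ext i; fin_cases i <;> simp [h0, h1, h2, h3]
    have hIc : Iᶜ = ({1, 2, 3} : Set (Fin 4)) := by
      ext i; fin_cases i <;> simp [h0, h1, h2, h3]
    rw [hI] at hpI; rw [hIc] at hpIc
    simp only [Set.image_insert_eq, Set.image_singleton, f0, f1, f2, f3,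
      convexHull_singleton, Set.mem_singleton_iff] at hpI hpIc
    rw [hpI] at hpIc
    exact ⟨a, left_mem_segment ℝ a b, mem_seg_of_hull_triple hpIc hba hbc hbd⟩
  -- FTTT : I = {1,2,3}, Iᶜ = {0}
  · have hI : I = ({1, 2, 3} : Set (Fin 4)) := by
      ext i; fin_cases i <;> simp [h0, h1, h2, h3]
    have hIc : Iᶜ = ({0} : Set (Fin 4)) := by
      ext i; fin_cases i <;> simp [h0, h1, h2, h3]
    rw [hI] at hpI; rw [hIc] at hpIc
    simp only [Set.image_insert_eq, Set.image_singleton, f0, f1, f2, f3,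
      convexHull_singleton, Set.mem_singleton_iff] at hpI hpIc
    rw [hpIc] at hpI
    exact ⟨a, left_mem_segment ℝ a b, mem_seg_of_hull_triple hpI hba hbc hbd⟩
  -- FTTF : I = {1,2}, Iᶜ = {0,3}
  · have hI : I = ({1, 2} : Set (Fin 4)) := by
      ext i; fin_cases i <;> simp [h0, h1, h2, h3]
    have hIc : Iᶜ = ({0, 3} : Set (Fin 4)) := by
      ext i; fin_cases i <;> simp [h0, h1, h2, h3]
    rw [hI] at hpI; rw [hIc] at hpIc
    simp only [Set.image_insert_eq, Set.image_singleton, f0, f1, f2, f3,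
      convexHull_pair] at hpI hpIc
    obtain ⟨z, hz1, hz2⟩ := cross_of_interleaved hpIc hpI hab hdc had hbc
    exact ⟨z, hz1, by rwa [segment_symm]⟩
  -- FTFT : I = {1,3}, Iᶜ = {0,2}
  · have hI : I = ({1, 3} : Set (Fin 4)) := by
      ext i; fin_cases i <;> simp [h0, h1, h2, h3]
    have hIc : Iᶜ = ({0, 2} : Set (Fin 4)) := by
      ext i; fin_cases i <;> simp [h0, h1, h2, h3]
    rw [hI] at hpI; rw [hIc] at hpIc
    simp only [Set.image_insert_eq, Set.image_singleton, f0, f1, f2, f3,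
      convexHull_pair] at hpI hpIc
    exact cross_of_interleaved hpIc hpI hab hcd hac hbd
  -- FTFF : I = {1}, Iᶜ = {0,2,3}
  · have hI : I = ({1} : Set (Fin 4)) := by
      ext i; fin_cases i <;> simp [h0, h1, h2, h3]
    have hIc : Iᶜ = ({0, 2, 3} : Set (Fin 4)) := by
      ext i; fin_cases i <;> simp [h0, h1, h2, h3]
    rw [hI] at hpI; rw [hIc] at hpIc
    simp only [Set.image_insert_eq, Set.image_singleton, f0, f1, f2, f3,
      convexHull_singleton, Set.mem_singleton_iff] at hpI hpIc
    rw [hpI] at hpIc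
    exact ⟨b, right_mem_segment ℝ a b, mem_seg_of_hull_triple hpIc hab hac had⟩
  -- FFTT : I = {2,3}, Iᶜ = {0,1}
  · have hI : I = ({2, 3} : Set (Fin 4)) := by
      ext i; fin_cases i <;> simp [h0, h1, h2, h3]
    have hIc : Iᶜ = ({0, 1} : Set (Fin 4)) := by
      ext i; fin_cases i <;> simp [h0, h1, h2, h3]
    rw [hI] at hpI; rw [hIc] at hpIc
    simp only [Set.image_insert_eq, Set.image_singleton, f0, f1, f2, f3,
      convexHull_pair] at hpI hpIc
    exact ⟨p, hpIc, hpI⟩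
  -- FFTF : I = {2}, Iᶜ = {3,0,1}
  · have hI : I = ({2} : Set (Fin 4)) := by
      ext i; fin_cases i <;> simp [h0, h1, h2, h3]
    have hIc : Iᶜ = ({3, 0, 1} : Set (Fin 4)) := by
      ext i; fin_cases i <;> simp [h0, h1, h2, h3]
    rw [hI] at hpI; rw [hIc] at hpIc
    simp only [Set.image_insert_eq, Set.image_singleton, f0, f1, f2, f3,
      convexHull_singleton, Set.mem_singleton_iff] at hpI hpIc
    rw [hpI] at hpIc
    exact ⟨c, mem_seg_of_hull_triple hpIc hdc hda hdb, left_mem_segment ℝ c d⟩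
  -- FFFT : I = {3}, Iᶜ = {2,0,1}
  · have hI : I = ({3} : Set (Fin 4)) := by
      ext i; fin_cases i <;> simp [h0, h1, h2, h3]
    have hIc : Iᶜ = ({2, 0, 1} : Set (Fin 4)) := by
      ext i; fin_cases i <;> simp [h0, h1, h2, h3]
    rw [hI] at hpI; rw [hIc] at hpIc
    simp only [Set.image_insert_eq, Set.image_singleton, f0, f1, f2, f3,
      convexHull_singleton, Set.mem_singleton_iff] at hpI hpIc
    rw [hpI] at hpIc
    exact ⟨d, mem_seg_of_hull_triple hpIc hcd hca hcb, right_mem_segment ℝ c d⟩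
  -- FFFF : I = ∅
  · have hI : I = (∅ : Set (Fin 4)) := by
      ext i; fin_cases i <;> simp [h0, h1, h2, h3]
    rw [hI] at hpI
    simp at hpI

open SimpleGraph in
lemma getVert_eq_support_getElem' {V : Type*} {G : SimpleGraph V} {u v : V} (w : G.Walk u v)
    {i : ℕ} (hi : i < w.support.length) : w.getVert i = w.support[i] := by
  induction w generalizing i with
  | nil =>
    simp only [Walk.support_nil, List.length_singleton] at hi
    interval_cases i
    · simp [Walk.getVert_zero]
  | cons h q ih =>
    cases i with
    | zero => simp [Walk.getVert_zero]
    | succ n =>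
      simp only [Walk.support_cons, List.length_cons] at hi
      simp only [Walk.support_cons, Walk.getVert_cons_succ, List.getElem_cons_succ]
      exact ih (by omega)

open SimpleGraph in
lemma cycle_getVert_inj {V : Type*} {G : SimpleGraph V} {v : V} {c : G.Walk v v}
    (hc : c.IsCycle) {i j : ℕ} (hi1 : 1 ≤ i) (hi : i ≤ c.length)
    (hj1 : 1 ≤ j) (hj : j ≤ c.length) (hij : i ≠ j) : c.getVert i ≠ c.getVert j := by
  intro h
  have hlen : c.support.length = c.length + 1 := Walk.length_support c
  have htl : c.support.tail.length = c.length := by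
    rw [List.length_tail, hlen]; omega
  have h1 : c.support.tail[i-1]'(by omega) = c.support[i]'(by omega) := by
    rw [List.getElem_tail]
    congr 1
    omega
  have h2 : c.support.tail[j-1]'(by omega) = c.support[j]'(by omega) := by
    rw [List.getElem_tail]
    congr 1
    omega
  have h3 : c.support.tail[i-1]'(by omega) = c.support.tail[j-1]'(by omega) := by
    rw [h1, h2, ← getVert_eq_support_getElem' c (by omega), ← getVert_eq_support_getElem' c (by omega), h]
  have := (hc.2.getElem_inj_iff).mp h3
  omega


end Aux

set_option maxHeartbeats 1000000 in
/-- The diameter graph of a finite planar set contains no cycle of length 2k, k ≥ 2. -/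
theorem diameter_graph_no_even_cycle (X : Finset (EuclideanSpace ℝ (Fin 2))) :
    ∀ k : ℕ, 2 ≤ k → ¬ HasCycleOfLength (DG X) (2 * k) := by
  rintro k hk ⟨v, c, hcyc, hlen⟩
  set m := c.length with hm
  have hm4 : 4 ≤ m := by omega
  have hmeven : Odd (m - 1) := ⟨k - 1, by omega⟩
  set D := Metric.diam (X : Set (EuclideanSpace ℝ (Fin 2))) with hDdef
  set p : ℕ → EuclideanSpace ℝ (Fin 2) := fun i => (c.getVert i : EuclideanSpace ℝ (Fin 2)) with hp
  have hadj : ∀ i, i < m → p i ≠ p (i+1) ∧ dist (p i) (p (i+1)) = D :=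
    fun i hi => c.adj_getVert_succ hi
  have hbdd : Bornology.IsBounded (X : Set (EuclideanSpace ℝ (Fin 2))) :=
    X.finite_toSet.isBounded
  have hle : ∀ i j, dist (p i) (p j) ≤ D := fun i j =>
    Metric.dist_le_diam_of_mem hbdd (c.getVert i).2 (c.getVert j).2
  have hD : 0 < D := by
    have h := hadj 0 (by omega)
    have := dist_pos.mpr h.1
    linarith [h.2]
  have hp0m : p m = p 0 := by
    show (c.getVert m : EuclideanSpace ℝ (Fin 2)) = (c.getVert 0 : EuclideanSpace ℝ (Fin 2))
    rw [hm, SimpleGraph.Walk.getVert_length, SimpleGraph.Walk.getVert_zero]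
  have hPinj : ∀ i j, 1 ≤ i → i ≤ m → 1 ≤ j → j ≤ m → i ≠ j → p i ≠ p j :=
    fun i j hi1 hi hj1 hj hij hEq =>
      cycle_getVert_inj hcyc hi1 hi hj1 hj hij (Subtype.coe_injective hEq)
  set a := p 0 with ha
  set b := p 1 with hb
  set g : EuclideanSpace ℝ (Fin 2) → ℝ :=
    fun x => (b - a) 0 * (x - a) 1 - (b - a) 1 * (x - a) 0 with hg
  have hg_comb : ∀ (t₁ t₂ : ℝ) (x y : EuclideanSpace ℝ (Fin 2)), t₁ + t₂ = 1 →
      g (t₁ • x + t₂ • y) = t₁ * g x + t₂ * g y := by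
    intro t₁ t₂ x y ht
    have ht2 : t₂ = 1 - t₁ := by linarith
    subst ht2
    simp only [hg, PiLp.add_apply, PiLp.smul_apply, PiLp.sub_apply, smul_eq_mul]
    ring
  have hg0 : g a = 0 := by simp [hg]
  have hg1 : g b = 0 := by simp only [hg]; ring
  have hgseg : ∀ z ∈ segment ℝ a b, g z = 0 := by
    rintro z ⟨t₁, t₂, ht₁, ht₂, hsum, hz⟩
    rw [← hz, hg_comb t₁ t₂ a b hsum, hg0, hg1]
    ring
  -- vertices 2..m-1 are off the line
  have hoff : ∀ j, 2 ≤ j → j ≤ m - 1 → g (p j) ≠ 0 := by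
    intro j hj2 hjm hgz
    have hmem : p j ∈ segment ℝ a b := by
      apply lens_on_line hD (hadj 0 (by omega)).2
      · simp only [hg] at hgz; linarith
      · exact hle j 0
      · exact hle j 1
    have hne0 : p j ≠ a := by
      rw [← hp0m]
      exact hPinj j m (by omega) (by omega) (by omega) (by omega) (by omega)
    have hne1 : p j ≠ b := hPinj j 1 (by omega) (by omega) (by omega) (by omega) (by omega)
    obtain ⟨t₁, t₂, ht₁, ht₂, hsum, hz⟩ := hmem
    have ht₂0 : t₂ ≠ 0 := by
      intro h
      apply hne0
      rw [← hz, h]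
      have : t₁ = 1 := by linarith
      simp [this]
    have ht₂1 : t₂ ≠ 1 := by
      intro h
      apply hne1
      rw [← hz, h]
      have : t₁ = 0 := by linarith
      simp [this]
    have hx0 : a ∈ Metric.closedBall (p (j+1)) D := by
      rw [Metric.mem_closedBall, dist_comm]
      exact hle (j+1) 0
    have hx1 : b ∈ Metric.closedBall (p (j+1)) D := by
      rw [Metric.mem_closedBall, dist_comm]
      exact hle (j+1) 1
    have hsc := (strictConvex_closedBall ℝ (p (j+1)) D) hx0 hx1 (hadj 0 (by omega)).1
      (by rcases (lt_or_eq_of_le ht₁) with h | h; exact h; exfalso; exact ht₂1 (by linarith))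
      (lt_of_le_of_ne ht₂ (Ne.symm ht₂0)) hsum
    rw [hz, interior_closedBall _ hD.ne', Metric.mem_ball] at hsc
    have := (hadj j (by omega)).2
    linarith
  -- sign alternation along the cycle
  have halt : ∀ j, 2 ≤ j → j + 1 ≤ m - 1 → g (p j) * g (p (j+1)) < 0 := by
    intro j hj2 hjm
    obtain ⟨z, hz1, hz2⟩ := diam_segments_cross hD (hadj 0 (by omega)).2
      (hadj j (by omega)).2 (hle 0 j) (hle 0 (j+1)) (hle 1 j) (hle 1 (j+1))
    have hgz : g z = 0 := hgseg z hz1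
    obtain ⟨t₁, t₂, ht₁, ht₂, hsum, hz⟩ := hz2
    have hcomb : t₁ * g (p j) + t₂ * g (p (j+1)) = 0 := by
      rw [← hg_comb t₁ t₂ _ _ hsum, hz, hgz]
    have hA := hoff j hj2 (by omega)
    have hB := hoff (j+1) (by omega) hjm
    exact opp_sign_of_combo ht₁ ht₂ hsum hcomb hA hB
  have hsign : ∀ j, 2 ≤ j → j ≤ m - 1 → 0 < g (p j) * g (p 2) * (-1 : ℝ)^j := by
    intro j hj2
    induction j, hj2 using Nat.le_induction with
    | base =>
      intro _
      have h2 := hoff 2 (by omega) (by omega)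
      have : (0:ℝ) < g (p 2) * g (p 2) := mul_self_pos.mpr h2
      calc (0:ℝ) < g (p 2) * g (p 2) := this
        _ = g (p 2) * g (p 2) * (-1:ℝ)^2 := by ring
    | succ n hn ih =>
      intro hn1
      have ihh := ih (by omega)
      have hflip := halt n hn (by omega)
      have hA := hoff n (by omega) (by omega)
      have hA2 : 0 < g (p n) ^ 2 := by positivity
      have key : g (p n) ^ 2 * (g (p (n+1)) * g (p 2) * (-1:ℝ)^n) < 0 := by
        have h1 : (g (p n) * g (p (n+1))) * (g (p n) * g (p 2) * (-1:ℝ)^n) < 0 :=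
          mul_neg_of_neg_of_pos hflip ihh
        nlinarith [h1]
      have key2 : g (p (n+1)) * g (p 2) * (-1:ℝ)^n < 0 := by nlinarith [key, hA2]
      have : (-1:ℝ)^(n+1) = -((-1:ℝ)^n) := by ring
      rw [this]
      nlinarith [key2]
  have hlast := hsign (m-1) (by omega) (le_refl _)
  rw [hmeven.neg_one_pow] at hlast
  have hlast' : g (p (m-1)) * g (p 2) < 0 := by nlinarith [hlast]
  -- edges (1,2) and (m-1, 0) must cross
  have hdm : dist (p (m-1)) (p 0) = D := by
    have := (hadj (m-1) (by omega)).2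
    have hmm : m - 1 + 1 = m := by omega
    rw [hmm] at this
    have hpm0 : p 0 = p m := by rw [hp0m, ha]
    rw [hpm0]
    exact this
  obtain ⟨z, hz1, hz2⟩ := diam_segments_cross hD (hadj 1 (by omega)).2 hdm
    (hle 1 (m-1)) (hle 1 0) (hle 2 (m-1)) (hle 2 0)
  obtain ⟨t₁, t₂, ht₁, ht₂, hsum, hzc⟩ := hz1
  obtain ⟨s₁, s₂, hs₁, hs₂, hssum, hzc'⟩ := hz2
  have hgz1 : g z = t₂ * g (p 2) := by
    rw [← hzc, hg_comb t₁ t₂ _ _ hsum]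
    have : g (p 1) = 0 := hg1
    rw [this]; ring
  have hgz2 : g z = s₁ * g (p (m-1)) := by
    rw [← hzc', hg_comb s₁ s₂ _ _ hssum]
    have : g (p 0) = 0 := hg0
    rw [this]; ring
  have ht₂0 : t₂ ≠ 0 := by
    intro h
    have hz1' : z = p 1 := by
      rw [← hzc, h]
      have : t₁ = 1 := by linarith
      simp [this]
    -- p 1 ∈ segment (p (m-1)) (p 0)
    have hseg : p 1 ∈ segment ℝ (p (m-1)) (p 0) := by
      rw [← hz1']
      exact ⟨s₁, s₂, hs₁, hs₂, hssum, hzc'⟩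
    have hdd := seg_dist hseg
    rw [hdm] at hdd
    have h10 : dist (p 1) (p 0) = D := by
      rw [dist_comm]; exact (hadj 0 (by omega)).2
    rw [h10] at hdd
    have : dist (p (m-1)) (p 1) = 0 := by linarith
    exact hPinj (m-1) 1 (by omega) (by omega) (by omega) (by omega) (by omega)
      (dist_eq_zero.mp this)
  have hs₁0 : s₁ ≠ 0 := by
    intro h
    have hz0' : z = p 0 := by
      rw [← hzc', h]
      have : s₂ = 1 := by linarith
      simp [this]
    have hseg : p 0 ∈ segment ℝ (p 1) (p 2) := by
      rw [← hz0']
      exact ⟨t₁, t₂, ht₁, ht₂, hsum, hzc⟩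
    have hdd := seg_dist hseg
    rw [(hadj 1 (by omega)).2] at hdd
    have h10 : dist (p 1) (p 0) = D := by
      rw [dist_comm]; exact (hadj 0 (by omega)).2
    rw [h10] at hdd
    have : dist (p 0) (p 2) = 0 := by linarith
    have h02 : p 0 = p 2 := dist_eq_zero.mp this
    exact hPinj m 2 (by omega) (by omega) (by omega) (by omega) (by omega)
      (by rw [hp0m]; exact h02)
  have ht₂pos : 0 < t₂ := lt_of_le_of_ne ht₂ (Ne.symm ht₂0)
  have hs₁pos : 0 < s₁ := lt_of_le_of_ne hs₁ (Ne.symm hs₁0)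
  have heq : t₂ * g (p 2) = s₁ * g (p (m-1)) := by rw [← hgz1, ← hgz2]
  have hg2 := hoff 2 (by omega) (by omega)
  have hgm := hoff (m-1) (by omega) (by omega)
  have hAB : g (p 2) * g (p (m-1)) < 0 := by rw [mul_comm]; exact hlast'
  have hBB : 0 < g (p (m-1)) * g (p (m-1)) := mul_self_pos.mpr hgm
  have h1 : t₂ * (g (p 2) * g (p (m-1))) < 0 := mul_neg_of_pos_of_neg ht₂pos hAB
  have h2 : 0 < s₁ * (g (p (m-1)) * g (p (m-1))) := mul_pos hs₁pos hBB
  have h3 : t₂ * (g (p 2) * g (p (m-1))) = s₁ * (g (p (m-1)) * g (p (m-1))) := by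
    calc t₂ * (g (p 2) * g (p (m-1))) = (t₂ * g (p 2)) * g (p (m-1)) := by ring
      _ = (s₁ * g (p (m-1))) * g (p (m-1)) := by rw [heq]
      _ = s₁ * (g (p (m-1)) * g (p (m-1))) := by ring
  linarith

end
end

section
/- The Cayley graph Cay(ℤ₁₇, {±1, ±6}) contains no cycle of length 3 and no cycle of length 5, and its independence number equals 7. Consequently f(17) ≤ 7. -/
noncomputable section

/-- `G` contains no cycle of length 3 and no cycle of length 5 -/
def NoC3C5 {V : Type*} (G : SimpleGraph V) : Prop :=
  ¬ HasCycleOfLength G 3 ∧ ¬ HasCycleOfLength G 5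

/-- `f n` is the minimum independence number among graphs on `n` vertices with
no 3-cycle and no 5-cycle -/
def fmin (n : ℕ) : ℕ :=
  sInf {k | ∃ G : SimpleGraph (Fin n), NoC3C5 G ∧ indepNum G = k}

/-- the Cayley graph `Cay(ℤ₁₇, {±1, ±6})` -/
def cay17 : SimpleGraph (ZMod 17) where
  Adj v w := w - v = 1 ∨ w - v = -1 ∨ w - v = 6 ∨ w - v = -6
  symm := by
    constructor
    intro v w h
    have : v - w = -(w - v) := by ring
    rcases h with h | h | h | h <;> rw [this, h] <;> simp
  loopless := by
    constructor
    intro v h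
    simp only [sub_self] at h
    rcases h with h | h | h | h <;> exact absurd h (by decide)

instance : DecidableRel cay17.Adj := fun v w =>
  decidable_of_iff (w - v = 1 ∨ w - v = -1 ∨ w - v = 6 ∨ w - v = -6) Iff.rfl

/-- the generators of the Cayley graph -/
def sgen : Fin 4 → ZMod 17 := ![1, -1, 6, -6]

lemma adj_cases {v w : ZMod 17} (h : cay17.Adj v w) : ∃ i : Fin 4, w - v = sgen i := by
  have h' : w - v = 1 ∨ w - v = -1 ∨ w - v = 6 ∨ w - v = -6 := h
  rcases h' with h | h | h | h
  exacts [⟨0, h⟩, ⟨1, h⟩, ⟨2, h⟩, ⟨3, h⟩]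

lemma sum3_ne : ∀ i j k : Fin 4, sgen i + sgen j + sgen k ≠ 0 := by decide

lemma sum5_ne : ∀ i j k l m : Fin 4,
    sgen i + sgen j + sgen k + sgen l + sgen m ≠ 0 := by decide

lemma cay17_noC3 : ¬ HasCycleOfLength cay17 3 := by
  rintro ⟨v, c, -, hlen⟩
  cases c with
  | nil => simp at hlen
  | cons h1 p => cases p with
    | nil => simp at hlen
    | cons h2 q => cases q with
      | nil => simp at hlen
      | cons h3 r => cases r with
        | cons h4 r' => simp [SimpleGraph.Walk.length_cons] at hlen
        | nil =>
          obtain ⟨i1, e1⟩ := adj_cases h1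
          obtain ⟨i2, e2⟩ := adj_cases h2
          obtain ⟨i3, e3⟩ := adj_cases h3
          exact sum3_ne i1 i2 i3 (by linear_combination -e1 - e2 - e3)

lemma cay17_noC5 : ¬ HasCycleOfLength cay17 5 := by
  rintro ⟨v, c, -, hlen⟩
  cases c with
  | nil => simp at hlen
  | cons h1 p => cases p with
    | nil => simp at hlen
    | cons h2 q => cases q with
      | nil => simp at hlen
      | cons h3 r => cases r with
        | nil => simp at hlen
        | cons h4 w => cases w with
          | nil => simp at hlen
          | cons h5 w' => cases w' with
            | cons h6 w'' => simp [SimpleGraph.Walk.length_cons] at hlen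
            | nil =>
              obtain ⟨i1, e1⟩ := adj_cases h1
              obtain ⟨i2, e2⟩ := adj_cases h2
              obtain ⟨i3, e3⟩ := adj_cases h3
              obtain ⟨i4, e4⟩ := adj_cases h4
              obtain ⟨i5, e5⟩ := adj_cases h5
              exact sum5_ne i1 i2 i3 i4 i5
                (by linear_combination -e1 - e2 - e3 - e4 - e5)

lemma cay17_indep_card_le (s : Finset (ZMod 17))
    (hind : ∀ x ∈ s, ∀ y ∈ s, x ≠ y → ¬ cay17.Adj x y) : s.card ≤ 7 := by
  by_contra hcard
  push_neg at hcard
  -- `s` and `s + 1` are disjoint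
  have key : ∀ x ∈ s, x + 1 ∉ s := by
    intro x hx hx1
    refine hind x hx (x + 1) hx1 ?_ (Or.inl (by ring))
    intro h
    have h0 := add_left_cancel (show x + 0 = x + 1 by rw [add_zero]; exact h)
    exact (by decide : (0 : ZMod 17) ≠ 1) h0
  have himg : (s.image (· + 1)).card = s.card :=
    Finset.card_image_of_injective _ (add_left_injective 1)
  have hdisj : Disjoint s (s.image (· + 1)) := by
    rw [Finset.disjoint_left]
    intro x hx hx'
    obtain ⟨y, hy, rfl⟩ := Finset.mem_image.mp hx'
    exact key y hy hx
  have hunion : (s ∪ s.image (· + 1)).card = s.card + s.card := by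
    rw [Finset.card_union_of_disjoint hdisj, himg]
  have hle17 : (s ∪ s.image (· + 1)).card ≤ 17 := by
    have h := Finset.card_le_univ (s ∪ s.image (· + 1))
    rwa [ZMod.card] at h
  have hcard8 : s.card = 8 := by omega
  -- the complement of the union is a singleton {m}
  have hcompl : ((s ∪ s.image (· + 1))ᶜ : Finset (ZMod 17)).card = 1 := by
    rw [Finset.card_compl, hunion, hcard8, ZMod.card]
  obtain ⟨m, hm⟩ := Finset.card_eq_one.mp hcompl
  have hstep : ∀ x : ZMod 17, x + 1 ≠ m → x ∈ s ∨ x + 1 ∈ s := by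
    intro x hxm
    have hxu : x + 1 ∈ s ∪ s.image (· + 1) := by
      by_contra hxu
      have hc : x + 1 ∈ (s ∪ s.image (· + 1))ᶜ := Finset.mem_compl.mpr hxu
      rw [hm, Finset.mem_singleton] at hc
      exact hxm hc
    rcases Finset.mem_union.mp hxu with h | h
    · exact Or.inr h
    · obtain ⟨y, hy, hyx⟩ := Finset.mem_image.mp h
      have hyx' : y = x := by
        have := add_left_injective 1 hyx
        simpa using this
      exact Or.inl (hyx' ▸ hy)
  have hm0 : m ∉ s := by
    intro hms
    have hc : m ∈ (s ∪ s.image (· + 1))ᶜ := by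
      rw [hm]; exact Finset.mem_singleton_self m
    exact (Finset.mem_compl.mp hc) (Finset.mem_union_left _ hms)
  have hne : ∀ a b : ZMod 17, a ≠ b → ∀ z : ZMod 17, z + a ≠ z + b := by
    intro a b hab z h
    exact hab (add_left_cancel h)
  have hnem : ∀ a : ZMod 17, a ≠ 0 → m + a ≠ m := by
    intro a ha h
    exact ha (add_left_cancel (show m + a = m + 0 by rw [add_zero]; exact h))
  -- chain: m+1 ∈ s, m+2 ∉ s, m+3 ∈ s, m+4 ∉ s, m+5 ∈ s, m+6 ∉ s, m+7 ∈ s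
  have h1 : m + 1 ∈ s := by
    rcases hstep m (hnem 1 (by decide)) with h | h
    · exact absurd h hm0
    · exact h
  have h2 : m + 2 ∉ s := fun h =>
    hind (m + 1) h1 (m + 2) h (hne 1 2 (by decide) m) (Or.inl (by ring))
  have h3 : m + 3 ∈ s := by
    have hs3 := hstep (m + 2)
      (by rw [show m + 2 + 1 = m + 3 by ring]; exact hnem 3 (by decide))
    rw [show m + 2 + 1 = m + 3 by ring] at hs3
    rcases hs3 with h | h
    · exact absurd h h2
    · exact h
  have h4 : m + 4 ∉ s := fun h =>
    hind (m + 3) h3 (m + 4) h (hne 3 4 (by decide) m) (Or.inl (by ring))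
  have h5 : m + 5 ∈ s := by
    have hs5 := hstep (m + 4)
      (by rw [show m + 4 + 1 = m + 5 by ring]; exact hnem 5 (by decide))
    rw [show m + 4 + 1 = m + 5 by ring] at hs5
    rcases hs5 with h | h
    · exact absurd h h4
    · exact h
  have h6 : m + 6 ∉ s := fun h =>
    hind (m + 5) h5 (m + 6) h (hne 5 6 (by decide) m) (Or.inl (by ring))
  have h7 : m + 7 ∈ s := by
    have hs7 := hstep (m + 6)
      (by rw [show m + 6 + 1 = m + 7 by ring]; exact hnem 7 (by decide))
    rw [show m + 6 + 1 = m + 7 by ring] at hs7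
    rcases hs7 with h | h
    · exact absurd h h6
    · exact h
  -- but m+1 and m+7 differ by 6 : an edge inside s
  exact hind (m + 1) h1 (m + 7) h7 (hne 1 7 (by decide) m)
    (Or.inr (Or.inr (Or.inl (by ring))))

lemma cay17_indepNum : indepNum cay17 = 7 := by
  have h7 : (7 : ℕ) ∈ {n | ∃ s : Finset (ZMod 17), s.card = n ∧
      ∀ x ∈ s, ∀ y ∈ s, x ≠ y → ¬ cay17.Adj x y} :=
    ⟨({0, 2, 4, 7, 9, 12, 14} : Finset (ZMod 17)), by decide, by decide⟩
  have hub : ∀ n ∈ {n | ∃ s : Finset (ZMod 17), s.card = n ∧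
      ∀ x ∈ s, ∀ y ∈ s, x ≠ y → ¬ cay17.Adj x y}, n ≤ 7 := by
    rintro n ⟨s, rfl, hs⟩
    exact cay17_indep_card_le s hs
  exact le_antisymm (csSup_le ⟨7, h7⟩ hub) (le_csSup ⟨7, hub⟩ h7)

/-- `Cay(ℤ₁₇, {±1, ±6})` has no 3-cycle and no 5-cycle, and its independence
number is 7; consequently `f 17 ≤ 7`. -/
theorem cay17_no_C3_no_C5_indep_seven :
    ¬ HasCycleOfLength cay17 3 ∧ ¬ HasCycleOfLength cay17 5 ∧
    indepNum cay17 = 7 ∧ fmin 17 ≤ 7 := by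
  refine ⟨cay17_noC3, cay17_noC5, cay17_indepNum, ?_⟩
  exact Nat.sInf_le ⟨cay17, ⟨cay17_noC3, cay17_noC5⟩, cay17_indepNum⟩

end
end
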